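/- arXiv:1110.5959 — 4 statements merged into one kernel-verified Lean document; each statement's English description precedes it below -/
import Mathlib

section
/- Let p be a prime with p ≡ 1 (mod 8), and let x, y, D be integers with p not dividing D such that x² − D·y² = p. If α is an integer with α² ≡ D (mod p), then either x + α·y ≡ 0 (mod p) or α·(x + α·y) is a quadratic residue modulo p. -/
private lemma legendreSym_congr (p : ℕ) [Fact p.Prime] {a b : ℤ}
    (h : ((a : ZMod p)) = (b : ZMod p)) : legendreSym p a = legendreSym p b := by
  unfold legendreSym
  rw [h]

private lemma chi8_one (p : ℕ) (hp8 : p % 8 = 1) : ZMod.χ₈ (p : ZMod 8) = 1 := by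
  have h : ((p : ℕ) : ZMod 8) = 1 := by
    rw [← ZMod.natCast_mod, hp8, Nat.cast_one]
  rw [h]; decide

private lemma chi4_one (p : ℕ) (hp8 : p % 8 = 1) : ZMod.χ₄ (p : ZMod 4) = 1 := by
  have hp4 : p % 4 = 1 := by omega
  have h : ((p : ℕ) : ZMod 4) = 1 := by
    rw [← ZMod.natCast_mod, hp4, Nat.cast_one]
  rw [h]; decide

/-- Key auxiliary: if `p ≡ 1 mod 8`, `gcd x n = 1`, `n ∣ x² - p`, then `n` is a QR mod `p`. -/
private lemma leg_nat_eq_one (p : ℕ) [Fact p.Prime] (hp8 : p % 8 = 1)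
    (x : ℤ) (n : ℕ) (hn : n ≠ 0) (hcop : Int.gcd x n = 1)
    (hmod : (n : ℤ) ∣ x ^ 2 - (p : ℤ)) : legendreSym p (n : ℤ) = 1 := by
  have hp2 : p ≠ 2 := by rintro rfl; norm_num at hp8
  have hp4 : p % 4 = 1 := by omega
  set k := n.factorization 2 with hk
  set m := ordCompl[2] n with hm
  have hnm : 2 ^ k * m = n := Nat.ordProj_mul_ordCompl_eq_self n 2
  have hmodd : Odd m :=
    Nat.odd_iff.mpr (Nat.two_dvd_ne_zero.mp (Nat.not_dvd_ordCompl Nat.prime_two hn))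
  have hmdvd : m ∣ n := hnm ▸ Dvd.intro_left _ rfl
  -- Split the symbol
  have hsplit : legendreSym p (n : ℤ) = (legendreSym p 2) ^ k * legendreSym p (m : ℤ) := by
    have hcast : ((n : ℤ)) = (2 : ℤ) ^ k * (m : ℤ) := by
      rw [← hnm]; push_cast; ring
    rw [hcast, legendreSym.mul]
    congr 1
    rw [jacobiSym.legendreSym.to_jacobiSym, jacobiSym.pow_left,
      ← jacobiSym.legendreSym.to_jacobiSym]
  have h2 : legendreSym p 2 = 1 := by
    rw [legendreSym.at_two hp2]
    exact chi8_one p hp8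
  have hmrec : legendreSym p (m : ℤ) = 1 := by
    rw [jacobiSym.legendreSym.to_jacobiSym]
    rw [jacobiSym.quadratic_reciprocity_one_mod_four' hmodd hp4]
    have hmdvdz : (m : ℤ) ∣ x ^ 2 - (p : ℤ) :=
      dvd_trans (Int.natCast_dvd_natCast.mpr hmdvd) hmod
    have hmodp : ((p : ℤ)) % (m : ℤ) = (x ^ 2) % (m : ℤ) :=
      Int.modEq_iff_dvd.mpr hmdvdz
    rw [jacobiSym.mod_left' hmodp]
    apply jacobiSym.sq_one'
    have hxn : Nat.Coprime x.natAbs n := hcop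
    exact Nat.Coprime.coprime_dvd_right hmdvd hxn
  rw [hsplit, h2, hmrec, one_pow, one_mul]

/-- Lemma (Soroosh): for a prime `p ≡ 1 (mod 8)` and integers `x, y, D` with `p ∤ D` and
`x² − D·y² = p`, and `α` with `α² ≡ D (mod p)`, either `x + α·y ≡ 0 (mod p)` or
`α·(x + α·y)` is a quadratic residue mod `p`. -/
theorem stmt0 (p : ℕ) [Fact p.Prime] (hp8 : p % 8 = 1)
    (x y D α : ℤ) (hD : ¬ (p : ℤ) ∣ D)
    (hxy : x ^ 2 - D * y ^ 2 = (p : ℤ))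
    (hα : (p : ℤ) ∣ (α ^ 2 - D)) :
    (p : ℤ) ∣ (x + α * y) ∨ legendreSym p (α * (x + α * y)) = 1 := by
  by_cases h : (p : ℤ) ∣ (x + α * y)
  · exact Or.inl h
  right
  have hprime : Prime (p : ℤ) := by
    rw [Int.prime_iff_natAbs_prime]
    simpa using (Fact.out : p.Prime)
  have hp2 : p ≠ 2 := by rintro rfl; norm_num at hp8
  -- p divides (x - αy)(x + αy)
  have hdvdprod : (p : ℤ) ∣ (x - α * y) * (x + α * y) := by
    have heq : (x - α * y) * (x + α * y) = (p : ℤ) - (α ^ 2 - D) * y ^ 2 := by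
      rw [← hxy]; ring
    rw [heq]
    exact dvd_sub (dvd_refl _) (hα.mul_right _)
  have hdvd : (p : ℤ) ∣ (x - α * y) := (hprime.dvd_mul.mp hdvdprod).resolve_right h
  -- p ∤ α
  have hpα : ¬ (p : ℤ) ∣ α := by
    intro hc
    apply hD
    have h1 : (p : ℤ) ∣ α ^ 2 := by rw [sq]; exact hc.mul_right α
    have := dvd_sub h1 hα
    simpa using this
  -- p ∤ y
  have hpy : ¬ (p : ℤ) ∣ y := by
    intro hc
    apply h
    have hx : (p : ℤ) ∣ x := by
      have := dvd_add hdvd (hc.mul_left α)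
      simpa using this
    exact dvd_add hx (hc.mul_left α)
  -- p ∤ x
  have hpx : ¬ (p : ℤ) ∣ x := by
    intro hc
    have hαy : (p : ℤ) ∣ α * y := by
      have := dvd_sub hc hdvd
      simpa using this
    rcases hprime.dvd_mul.mp hαy with h1 | h2
    · exact hpα h1
    · exact hpy h2
  have hy0 : ((y : ZMod p)) ≠ 0 := by
    rw [Ne, ZMod.intCast_zmod_eq_zero_iff_dvd]; exact hpy
  have hx0 : ((x : ZMod p)) ≠ 0 := by
    rw [Ne, ZMod.intCast_zmod_eq_zero_iff_dvd]; exact hpx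
  -- gcd x y = 1
  have hcop : Int.gcd x y = 1 := by
    set g := Int.gcd x y with hg
    have hgx : (g : ℤ) ∣ x := Int.gcd_dvd_left x y
    have hgy : (g : ℤ) ∣ y := Int.gcd_dvd_right x y
    have hgp : (g : ℤ) ∣ (p : ℤ) := by
      rw [← hxy]
      exact dvd_sub (by rw [sq]; exact hgx.mul_right x)
        ((by rw [sq]; exact hgy.mul_right y : (g:ℤ) ∣ y^2).mul_left D)
    have hgp' : g ∣ p := Int.natCast_dvd_natCast.mp hgp
    rcases (Fact.out : p.Prime).eq_one_or_self_of_dvd g hgp' with h1 | h1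
    · exact h1
    · exact absurd (h1 ▸ hgy) hpy
  -- legendreSym p y = 1 via the auxiliary lemma
  have hyn0 : y.natAbs ≠ 0 := fun hc => hpy (by simp [Int.natAbs_eq_zero.mp hc])
  have hmod : (y.natAbs : ℤ) ∣ x ^ 2 - (p : ℤ) := by
    rw [← hxy]
    exact Int.natAbs_dvd.mpr ⟨D * y, by ring⟩
  have hlegnat : legendreSym p (y.natAbs : ℤ) = 1 :=
    leg_nat_eq_one p hp8 x y.natAbs hyn0 (by rwa [Int.gcd, Int.natAbs_natCast]) hmod
  have hlegy : legendreSym p y = 1 := by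
    rcases Int.natAbs_eq y with hy | hy
    · rw [hy]; exact hlegnat
    · rw [hy, show -(y.natAbs : ℤ) = (-1) * (y.natAbs : ℤ) by ring, legendreSym.mul,
        legendreSym.at_neg_one hp2, hlegnat, mul_one]
      exact chi4_one p hp8
  -- α(x+αy)·y² ≡ 2x²y mod p
  have key : (p : ℤ) ∣ (α * (x + α * y) * y ^ 2 - 2 * x ^ 2 * y) := by
    have heq : α * (x + α * y) * y ^ 2 - 2 * x ^ 2 * y
        = -((x - α * y) * (2 * x * y + α * y ^ 2)) := by ring
    rw [heq]
    exact (hdvd.mul_right _).neg_right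
  have hcast : ((α * (x + α * y) * y ^ 2 : ℤ) : ZMod p) = ((2 * x ^ 2 * y : ℤ) : ZMod p) := by
    have := (ZMod.intCast_zmod_eq_zero_iff_dvd _ p).mpr key
    push_cast at this ⊢
    linear_combination this
  have hchain : legendreSym p (α * (x + α * y)) * legendreSym p (y ^ 2)
      = legendreSym p 2 * legendreSym p (x ^ 2) * legendreSym p y := by
    rw [← legendreSym.mul, legendreSym_congr p hcast, legendreSym.mul, legendreSym.mul]
  rw [legendreSym.sq_one' p hy0, mul_one, legendreSym.sq_one' p hx0, mul_one,
    legendreSym.at_two hp2, chi8_one p hp8, one_mul, hlegy] at hchain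
  exact hchain
end

section
/- Let p be a prime with p ≡ 1 (mod 8), and let x, y be integers with x² − 2y² = p. Then y is a quadratic residue modulo p. -/
/-- For a prime `p ≡ 1 (mod 8)` and integers `x, y` with `x² − 2y² = p`,
`y` is a quadratic residue modulo `p`. -/
theorem stmt1 (p : ℕ) [Fact p.Prime] (hp8 : p % 8 = 1)
    (x y : ℤ) (hxy : x ^ 2 - 2 * y ^ 2 = (p : ℤ)) :
    legendreSym p y = 1 := by
  have hp : p.Prime := Fact.out
  have hp2 : 2 ≤ p := hp.two_le
  have hp4 : p % 4 = 1 := by omega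
  have hpodd : Odd p := by rw [Nat.odd_iff]; omega
  -- p cannot divide both x and y
  have hnd : ¬ ((p : ℤ) ∣ x ∧ (p : ℤ) ∣ y) := by
    rintro ⟨hx, hy⟩
    have h2 : (p : ℤ) ^ 2 ∣ (p : ℤ) := by
      have hdx : (p : ℤ) ^ 2 ∣ x ^ 2 := pow_dvd_pow_of_dvd hx 2
      have hdy : (p : ℤ) ^ 2 ∣ 2 * y ^ 2 := (pow_dvd_pow_of_dvd hy 2).mul_left 2
      simpa [hxy] using dvd_sub hdx hdy
    have h3 : (p ^ 2 : ℕ) ∣ p := by exact_mod_cast h2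
    have := Nat.le_of_dvd hp.pos h3
    nlinarith
  have hpZ : Prime (p : ℤ) := Nat.prime_iff_prime_int.mp hp
  have hy0 : y ≠ 0 := by
    rintro rfl
    have hx2' : x ^ 2 = (p : ℤ) := by linarith [hxy]
    have hx2 : (p : ℤ) ∣ x ^ 2 := by rw [hx2']
    exact hnd ⟨hpZ.dvd_of_dvd_pow hx2, dvd_zero _⟩
  set a : ℕ := y.natAbs with ha
  have ha0 : a ≠ 0 := by simpa [ha] using hy0
  set k : ℕ := a.factorization 2 with hk
  set m : ℕ := a / 2 ^ k with hm
  have hsplit : 2 ^ k * m = a := Nat.ordProj_mul_ordCompl_eq_self a 2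
  have hmodd : Odd m := by
    have h2 : ¬ 2 ∣ m := Nat.not_dvd_ordCompl Nat.prime_two ha0
    exact Nat.odd_iff.mpr (by omega)
  -- m divides y (as integers)
  have hma : m ∣ a := Nat.ordCompl_dvd a 2
  have hmy : (m : ℤ) ∣ y := Int.dvd_natAbs.mp (Int.natCast_dvd_natCast.mpr hma)
  -- gcd x m = 1
  have hgcd : Int.gcd x (m : ℤ) = 1 := by
    by_contra h
    obtain ⟨q, hq, hqd⟩ := Nat.exists_prime_and_dvd h
    have hqx : (q : ℤ) ∣ x :=
      Int.dvd_natAbs.mp (Int.natCast_dvd_natCast.mpr (hqd.trans (Nat.gcd_dvd_left _ _)))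
    have hqm : q ∣ m := by
      have := hqd.trans (Nat.gcd_dvd_right x.natAbs ((m : ℤ)).natAbs)
      simpa using this
    have hqy : (q : ℤ) ∣ y := (Int.natCast_dvd_natCast.mpr hqm).trans hmy
    have hqp : (q : ℤ) ∣ (p : ℤ) := by
      rw [← hxy]
      exact dvd_sub (dvd_pow hqx two_ne_zero) ((dvd_pow hqy two_ne_zero).mul_left 2)
    have hqp' : q ∣ p := Int.natCast_dvd_natCast.mp hqp
    have : q = p := (Nat.prime_dvd_prime_iff_eq hq hp).mp hqp'
    subst this
    exact hnd ⟨hqx, hqy⟩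
  -- compute via the Jacobi symbol
  rw [jacobiSym.legendreSym.to_jacobiSym]
  have hJsign : jacobiSym (Int.sign y) p = 1 := by
    rcases Int.lt_or_lt_of_ne hy0 |>.symm.imp Int.sign_eq_one_of_pos Int.sign_eq_neg_one_of_neg with h | h
    · rw [h]; exact jacobiSym.one_left p
    · rw [h, jacobiSym.at_neg_one hpodd, ZMod.χ₄_nat_one_mod_four hp4]
  have hJ2 : jacobiSym 2 p = 1 := by
    rw [jacobiSym.at_two hpodd, ZMod.χ₈_nat_eq_if_mod_eight]
    have h1 : p % 2 = 1 := by omega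
    simp [h1, hp8]
  have hJm : jacobiSym (m : ℤ) p = 1 := by
    have hrec : jacobiSym (p : ℤ) m = jacobiSym (m : ℤ) p :=
      jacobiSym.quadratic_reciprocity_one_mod_four hp4 hmodd
    rw [← hrec]
    have hcong : (p : ℤ) ≡ x ^ 2 [ZMOD (m : ℕ)] := by
      rw [Int.ModEq] at *
      refine (Int.modEq_iff_dvd.mpr ?_).symm
      have hd : (m : ℤ) ∣ 2 * y ^ 2 := (dvd_pow hmy two_ne_zero).mul_left 2
      have heq : (p : ℤ) - x ^ 2 = -(2 * y ^ 2) := by linarith [hxy]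
      rw [heq]
      exact dvd_neg.mpr hd
    rw [jacobiSym.mod_left' hcong]
    exact jacobiSym.sq_one' hgcd
  have hy' : y = Int.sign y * (2 ^ k * (m : ℤ)) := by
    have h1 : ((2 ^ k * m : ℕ) : ℤ) = 2 ^ k * (m : ℤ) := by push_cast; ring
    rw [← h1, hsplit, Int.sign_mul_natAbs]
  rw [hy', jacobiSym.mul_left, jacobiSym.mul_left, jacobiSym.pow_left, hJsign, hJ2, hJm]
  norm_num
end

section
/- Let p ≡ 1 (mod 8) be a prime. Then the equation x² + p·y² = 2·z² has a solution in rational numbers with (x,y,z) ≠ (0,0,0). -/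
instance : Zsqrtd.Nonsquare 2 :=
  ⟨fun n h => by
    have hn : n ≤ 1 := by nlinarith
    interval_cases n <;> omega⟩

private lemma sq_eq_two_mul_sq {x y : ℤ} (h : x ^ 2 = 2 * y ^ 2) : x = 0 ∧ y = 0 := by
  have h' : x * x = ((2 : ℕ) : ℤ) * y * y := by push_cast; ring_nf; nlinarith [h]
  exact Zsqrtd.divides_sq_eq_zero_z h'

private lemma bmod_sq_bound (x : ℤ) (n : ℕ) (hn : 0 < n) :
    4 * (Int.bmod x n) ^ 2 ≤ (n : ℤ) ^ 2 := by
  have h1 := Int.le_bmod (x := x) hn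
  have h2 := Int.bmod_le (x := x) hn
  have hb : 2 * (Int.bmod x n).natAbs ≤ n := by omega
  have hb' : (2 * (Int.bmod x n).natAbs : ℤ) ≤ (n : ℤ) := by exact_mod_cast hb
  have habs : |Int.bmod x n| = ((Int.bmod x n).natAbs : ℤ) := Int.abs_eq_natAbs _
  nlinarith [sq_abs (Int.bmod x n), abs_nonneg (Int.bmod x n)]

/-- Fermat descent for the form `x² - 2y²`. -/
private lemma descent (p : ℕ) (hp : p.Prime) :
    ∀ n : ℕ, ∀ k x y : ℤ, k.natAbs = n → k ≠ 0 → n < p →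
      x ^ 2 - 2 * y ^ 2 = k * p →
      ∃ a b : ℤ, a ^ 2 - 2 * b ^ 2 = (p : ℤ) ∨ a ^ 2 - 2 * b ^ 2 = -(p : ℤ) := by
  intro n
  induction n using Nat.strong_induction_on with
  | _ n ih =>
    intro k x y hkn hk0 hnp hxy
    have hn0 : 0 < n := by
      rcases Nat.eq_zero_or_pos n with h | h
      · exact absurd (Int.natAbs_eq_zero.mp (hkn.trans h)) hk0
      · exact h
    rcases eq_or_lt_of_le (show 1 ≤ n from hn0) with h1 | h2
    · -- n = 1, so k = ±1
      have hk : k = 1 ∨ k = -1 := by omega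
      rcases hk with rfl | rfl
      · exact ⟨x, y, Or.inl (by linarith)⟩
      · exact ⟨x, y, Or.inr (by linarith)⟩
    · -- 2 ≤ n
      have h2n : 2 ≤ n := h2
      set x1 := Int.bmod x n with hx1def
      set y1 := Int.bmod y n with hy1def
      have hdxn : (n : ℤ) ∣ x1 - x := Int.dvd_bmod_sub_self
      have hdyn : (n : ℤ) ∣ y1 - y := Int.dvd_bmod_sub_self
      have hdx : k ∣ x1 - x := by rw [← hkn] at hdxn; exact Int.natAbs_dvd.mp hdxn
      have hdy : k ∣ y1 - y := by rw [← hkn] at hdyn; exact Int.natAbs_dvd.mp hdyn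
      have h1 : k ∣ x1 ^ 2 - 2 * y1 ^ 2 := by
        have heq : x1 ^ 2 - 2 * y1 ^ 2 =
            (x1 - x) * (x1 + x) - 2 * ((y1 - y) * (y1 + y)) + k * p := by
          rw [← hxy]; ring
        rw [heq]
        exact dvd_add (dvd_sub (hdx.mul_right _) ((hdy.mul_right _).mul_left 2))
          (dvd_mul_right _ _)
      obtain ⟨k', hk'⟩ := h1
      have hxb : 4 * x1 ^ 2 ≤ (n : ℤ) ^ 2 := bmod_sq_bound x n hn0
      have hyb : 4 * y1 ^ 2 ≤ (n : ℤ) ^ 2 := bmod_sq_bound y n hn0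
      -- k' ≠ 0
      have hk'0 : k' ≠ 0 := by
        intro h0
        rw [h0, mul_zero] at hk'
        have hxy0 : x1 = 0 ∧ y1 = 0 := sq_eq_two_mul_sq (by linarith)
        have hdx' : k ∣ x := by
          have := hdx; rw [hxy0.1, zero_sub] at this
          exact (dvd_neg).mp this
        have hdy' : k ∣ y := by
          have := hdy; rw [hxy0.2, zero_sub] at this
          exact (dvd_neg).mp this
        obtain ⟨u, hu⟩ := hdx'
        obtain ⟨v, hv⟩ := hdy'
        have hkp : k * (k * (u ^ 2 - 2 * v ^ 2)) = k * p := by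
          rw [← hxy, hu, hv]; ring
        have hkdvdp : k ∣ (p : ℤ) := ⟨_, (mul_left_cancel₀ hk0 hkp).symm⟩
        have hnab : n ∣ p := by
          have := Int.natAbs_dvd_natAbs.mpr hkdvdp
          simpa [hkn] using this
        rcases (Nat.Prime.eq_one_or_self_of_dvd hp n hnab) with h | h <;> omega
      -- |k'| < n
      have hn2 : (2 : ℤ) ≤ (n : ℤ) := by exact_mod_cast h2n
      have hk'n : k'.natAbs < n := by
        by_contra hcon
        push_neg at hcon
        have hle : (n : ℤ) * (n : ℤ) ≤ |k| * |k'| := by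
          rw [Int.abs_eq_natAbs, Int.abs_eq_natAbs, hkn]
          exact_mod_cast Nat.mul_le_mul le_rfl hcon
        have hlt : |k * k'| < (n : ℤ) * (n : ℤ) := by
          rw [← hk', abs_lt]
          constructor <;> nlinarith [sq_nonneg x1, sq_nonneg y1]
        rw [abs_mul] at hlt
        linarith
      -- construct new solution
      have hdX : k ∣ x * x1 - 2 * (y * y1) := by
        have heq : x * x1 - 2 * (y * y1) =
            x * (x1 - x) - 2 * (y * (y1 - y)) + k * p := by rw [← hxy]; ring
        rw [heq]
        exact dvd_add (dvd_sub (hdx.mul_left _) ((hdy.mul_left _).mul_left 2))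
          (dvd_mul_right _ _)
      have hdY : k ∣ x * y1 - y * x1 := by
        have heq : x * y1 - y * x1 = x * (y1 - y) - y * (x1 - x) := by ring
        rw [heq]
        exact dvd_sub (hdy.mul_left _) (hdx.mul_left _)
      obtain ⟨X, hX⟩ := hdX
      obtain ⟨Y, hY⟩ := hdY
      have hid : (k * p) * (k * k') = (k * X) ^ 2 - 2 * (k * Y) ^ 2 := by
        rw [← hX, ← hY, ← hxy, ← hk']; ring
      have hnew : X ^ 2 - 2 * Y ^ 2 = k' * p := by
        have hk2 : (k * k : ℤ) ≠ 0 := mul_ne_zero hk0 hk0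
        have : (k * k) * (X ^ 2 - 2 * Y ^ 2) = (k * k) * (k' * p) := by
          nlinarith [hid]
        exact mul_left_cancel₀ hk2 this
      exact ih k'.natAbs hk'n k' X Y rfl hk'0 (hk'n.trans hnp) hnew

/-- For a prime `p ≡ 1 (mod 8)`, the equation `x² + p·y² = 2·z²` has a nonzero
rational solution. -/
theorem stmt4 (p : ℕ) (hp : p.Prime) (hp8 : p % 8 = 1) :
    ∃ x y z : ℚ, ¬ (x = 0 ∧ y = 0 ∧ z = 0) ∧
      x ^ 2 + (p : ℚ) * y ^ 2 = 2 * z ^ 2 := by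
  haveI : Fact p.Prime := ⟨hp⟩
  have hp2 : p ≠ 2 := by omega
  have hpge : 2 ≤ p := hp.two_le
  have hp0 : 0 < p := by omega
  -- 2 is a square mod p
  obtain ⟨a, ha⟩ : IsSquare (2 : ZMod p) :=
    (ZMod.exists_sq_eq_two_iff hp2).mpr (by omega)
  set A : ℤ := (a.val : ℤ) with hAdef
  have hvaln : ((a.val : ℕ) : ZMod p) = a := by
    rw [ZMod.natCast_val, ZMod.cast_id]
  have hA : ((A ^ 2 - 2 : ℤ) : ZMod p) = 0 := by
    rw [hAdef]
    push_cast
    rw [hvaln, ha]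
    ring
  have hpd : (p : ℤ) ∣ A ^ 2 - 2 := (ZMod.intCast_zmod_eq_zero_iff_dvd _ _).mp hA
  set B : ℤ := Int.bmod A p with hBdef
  have hBA : (p : ℤ) ∣ B - A := Int.dvd_bmod_sub_self
  have hpdB : (p : ℤ) ∣ B ^ 2 - 2 := by
    have heq : B ^ 2 - 2 = (B - A) * (B + A) + (A ^ 2 - 2) := by ring
    rw [heq]
    exact dvd_add (hBA.mul_right _) hpd
  obtain ⟨k, hk⟩ := hpdB
  have hkk : B ^ 2 - 2 * 1 ^ 2 = k * p := by rw [one_pow, mul_one]; linarith [hk]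
  have hk0 : k ≠ 0 := by
    intro h0
    rw [h0, mul_zero] at hk
    have : B = 0 ∧ (1 : ℤ) = 0 := sq_eq_two_mul_sq (by linarith)
    exact one_ne_zero this.2
  have hBb : 4 * B ^ 2 ≤ (p : ℤ) ^ 2 := bmod_sq_bound A p hp0
  have hkp : k.natAbs < p := by
    by_contra hcon
    push_neg at hcon
    have h1 : (p : ℤ) * p ≤ (p : ℤ) * |k| := by
      have hak : (p : ℤ) ≤ |k| := by
        rw [Int.abs_eq_natAbs]; exact_mod_cast hcon
      exact mul_le_mul_of_nonneg_left hak (by positivity)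
    have h2 : |(p : ℤ) * k| < (p : ℤ) * p := by
      rw [← hk, abs_lt]
      have hpz : (2 : ℤ) ≤ (p : ℤ) := by exact_mod_cast hpge
      constructor <;> nlinarith [sq_nonneg B]
    rw [abs_mul, abs_of_nonneg (by positivity : (0:ℤ) ≤ (p:ℤ))] at h2
    linarith
  obtain ⟨c, d, hcd⟩ := descent p hp k.natAbs k B 1 rfl hk0 hkp hkk
  -- normalize to c² - 2d² = -p
  have hfin : ∃ c d : ℤ, c ^ 2 - 2 * d ^ 2 = -(p : ℤ) := by
    rcases hcd with h | h
    · exact ⟨c + 2 * d, c + d, by linarith [h, sq_nonneg c]⟩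
    · exact ⟨c, d, h⟩
  obtain ⟨c', d', hcd'⟩ := hfin
  refine ⟨(c' : ℚ), 1, (d' : ℚ), ?_, ?_⟩
  · rintro ⟨-, h, -⟩
    exact one_ne_zero h
  · have hzz : (c' : ℤ) ^ 2 + (p : ℤ) = 2 * d' ^ 2 := by linarith
    rw [one_pow, mul_one]
    exact_mod_cast hzz
end

section
/- Let p ≡ 1 (mod 8) be a prime such that 1+i is not a square modulo p. Then the curve v² = p(u⁴ − 4u³ + 24u + 20) has no Q_p-rational points. -/
/-- Key arithmetic lemma: under the hypotheses, the quartic has no root mod `p`. -/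
lemma stmt17_zmod (p : ℕ) [Fact p.Prime] (hp8 : p % 8 = 1)
    (h : ∀ c : ℤ, (p : ℤ) ∣ (c ^ 2 + 1) → legendreSym p (1 + c) = -1)
    (r : ZMod p) : r ^ 4 - 4 * r ^ 3 + 24 * r + 20 ≠ 0 := by
  have hp : p.Prime := Fact.out
  have hp2 : p ≠ 2 := by omega
  have h2z : (2 : ZMod p) ≠ 0 := by
    have : ((2 : ℕ) : ZMod p) ≠ 0 := by
      rw [Ne, ZMod.natCast_eq_zero_iff]
      intro hd
      exact hp2 ((Nat.prime_dvd_prime_iff_eq hp Nat.prime_two).mp hd)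
    simpa using this
  -- a square root of -1
  have hm1 : IsSquare (-1 : ZMod p) := by
    rw [ZMod.exists_sq_eq_neg_one_iff]; omega
  obtain ⟨c, hc⟩ := hm1  -- hc : -1 = c * c
  have hc2 : c ^ 2 = -1 := by rw [sq]; exact hc.symm
  -- any square root d of -1 gives 1 + d a nonsquare
  have nonsq : ∀ d : ZMod p, d ^ 2 = -1 → ¬ IsSquare (1 + d) := by
    intro d hd
    have hdvd : (p : ℤ) ∣ ((d.val : ℤ) ^ 2 + 1) := by
      rw [← ZMod.intCast_zmod_eq_zero_iff_dvd]
      push_cast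
      rw [ZMod.natCast_val, ZMod.cast_id, hd]; ring
    have := h (d.val : ℤ) hdvd
    rw [legendreSym.eq_neg_one_iff] at this
    have hcast : ((1 + (d.val : ℤ) : ℤ) : ZMod p) = 1 + d := by
      push_cast
      rw [ZMod.natCast_val, ZMod.cast_id]
    rwa [hcast] at this
  have ns1 : ¬ IsSquare (1 + c) := nonsq c hc2
  have ns2 : ¬ IsSquare (1 - c) := by
    have := nonsq (-c) (by rw [neg_pow]; simp [hc2])
    simpa [sub_eq_add_neg] using this
  intro hr
  -- factorization over ZMod p
  have hfac : (r ^ 2 - 2 * (1 + c) * r - 2 * (2 + c)) *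
      (r ^ 2 - 2 * (1 - c) * r - 2 * (2 - c)) = 0 := by
    have : (r ^ 2 - 2 * (1 + c) * r - 2 * (2 + c)) *
        (r ^ 2 - 2 * (1 - c) * r - 2 * (2 - c))
        = r ^ 4 - 4 * r ^ 3 + 24 * r + 20 := by
      linear_combination (-4 * (r + 1) ^ 2) * hc2
    rw [this, hr]
  rcases mul_eq_zero.mp hfac with hA | hB
  · -- IsSquare (1 + c)
    refine ns1 ?_
    have h4 : (r - 1 - c) ^ 2 = 4 * (1 + c) := by linear_combination hA + hc2
    refine ⟨(r - 1 - c) * (2 : ZMod p)⁻¹, ?_⟩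
    field_simp
    linear_combination -h4
  · -- IsSquare (1 - c), combine with IsSquare 2
    exfalso
    have hsq2 : IsSquare (2 : ZMod p) := by
      rw [ZMod.exists_sq_eq_two_iff hp2]; exact Or.inl hp8
    have hsq1c : IsSquare (1 - c) := by
      have h4 : (r - 1 + c) ^ 2 = 4 * (1 - c) := by linear_combination hB + hc2
      refine ⟨(r - 1 + c) * (2 : ZMod p)⁻¹, ?_⟩
      field_simp
      linear_combination -h4
    obtain ⟨a, ha⟩ := hsq2
    obtain ⟨b, hb⟩ := hsq1c
    have hb0 : b ≠ 0 := by
      intro h0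
      rw [h0, mul_zero] at hb
      have hc1 : c = 1 := by linear_combination -hb
      rw [hc1] at hc2
      have : (2 : ZMod p) = 0 := by linear_combination hc2
      exact h2z this
    refine ns1 ⟨a * b⁻¹, ?_⟩
    have key : (1 + c) * b ^ 2 = a ^ 2 := by
      linear_combination -(1 + c) * hb + ha - hc2
    field_simp
    linear_combination key

/-- For a prime `p ≡ 1 (mod 8)` such that `1+i` is a quadratic non-residue mod `p`
(i.e. for `c` with `c² ≡ −1 (mod p)`, `1+c` is a non-residue), the curve
`v² = p(u⁴ − 4u³ + 24u + 20)` has no `ℚ_p`-rational points. -/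
theorem stmt17 (p : ℕ) [Fact p.Prime] (hp8 : p % 8 = 1)
    (h : ∀ c : ℤ, (p : ℤ) ∣ (c ^ 2 + 1) → legendreSym p (1 + c) = -1) :
    ¬ ∃ u v : ℚ_[p],
        v ^ 2 = (p : ℚ_[p]) * (u ^ 4 - 4 * u ^ 3 + 24 * u + 20) := by
  have hp : p.Prime := Fact.out
  have hp1R : (1 : ℝ) < (p : ℝ) := by exact_mod_cast hp.one_lt
  have hpQ : (p : ℚ_[p]) ≠ 0 := Nat.cast_ne_zero.mpr hp.ne_zero
  have hinj : Function.Injective fun n : ℤ => (p : ℝ) ^ n :=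
    (zpow_right_strictMono₀ hp1R).injective
  rintro ⟨u, v, hv⟩
  set F : ℚ_[p] := u ^ 4 - 4 * u ^ 3 + 24 * u + 20 with hF
  -- F is nonzero with even valuation
  have key : F ≠ 0 ∧ ∃ k : ℤ, F.valuation = 2 * k := by
    rcases le_or_gt ‖u‖ 1 with hu | hu
    · -- u is a p-adic integer; F is a unit
      set U : ℤ_[p] := ⟨u, hu⟩ with hU
      set G : ℤ_[p] := U ^ 4 - 4 * U ^ 3 + 24 * U + 20 with hG
      have hFG : F = (G : ℚ_[p]) := by
        push_cast [hG]
        rfl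
      have hGz : PadicInt.toZMod G ≠ 0 := by
        have : PadicInt.toZMod G =
            (PadicInt.toZMod U) ^ 4 - 4 * (PadicInt.toZMod U) ^ 3
              + 24 * (PadicInt.toZMod U) + 20 := by
          simp [hG, map_ofNat]
        rw [this]
        exact stmt17_zmod p hp8 h (PadicInt.toZMod U)
      have hG1 : ‖G‖ = 1 := by
        refine le_antisymm (PadicInt.norm_le_one G) ?_
        by_contra hlt
        push_neg at hlt
        have hdvd : (p : ℤ_[p]) ∣ G := (PadicInt.norm_lt_one_iff_dvd G).mp hlt
        have : PadicInt.toZMod G = 0 := by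
          rw [← RingHom.mem_ker, PadicInt.ker_toZMod,
            PadicInt.maximalIdeal_eq_span_p, Ideal.mem_span_singleton]
          exact hdvd
        exact hGz this
      have hF1 : ‖F‖ = 1 := by rw [hFG]; exact hG1
      have hF0 : F ≠ 0 := by
        intro h0; rw [h0, norm_zero] at hF1; norm_num at hF1
      refine ⟨hF0, 0, ?_⟩
      have := Padic.norm_eq_zpow_neg_valuation hF0
      rw [hF1] at this
      have : (p : ℝ) ^ (0 : ℤ) = (p : ℝ) ^ (-F.valuation) := by
        rw [zpow_zero]; exact this
      have := hinj this
      omega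
    · -- |u| > 1 : valuation of F equals 4 * valuation of u
      have hu0 : u ≠ 0 := by
        intro h0; rw [h0, norm_zero] at hu; norm_num at hu
      have hnu : (0 : ℝ) < ‖u‖ := norm_pos_iff.mpr hu0
      have h4 : ‖(4 : ℚ_[p])‖ ≤ 1 := by
        have := Padic.norm_int_le_one (p := p) 4
        simpa using this
      have h24 : ‖(24 : ℚ_[p])‖ ≤ 1 := by
        have := Padic.norm_int_le_one (p := p) 24
        simpa using this
      have h20 : ‖(20 : ℚ_[p])‖ ≤ 1 := by
        have := Padic.norm_int_le_one (p := p) 20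
        simpa using this
      have hu3 : ‖u‖ ^ 3 < ‖u‖ ^ 4 := by
        have := pow_lt_pow_right₀ hu (by norm_num : (3:ℕ) < 4)
        exact this
      have hu1 : ‖u‖ < ‖u‖ ^ 4 := by
        calc ‖u‖ = ‖u‖ ^ 1 := (pow_one _).symm
        _ < ‖u‖ ^ 4 := pow_lt_pow_right₀ hu (by norm_num)
      have h14 : (1 : ℝ) < ‖u‖ ^ 4 := by
        calc (1:ℝ) = 1 ^ 4 := by norm_num
        _ < ‖u‖ ^ 4 := by
          exact pow_lt_pow_left₀ hu (by norm_num) (by norm_num)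
      have hrest : ‖-(4 * u ^ 3) + (24 * u + 20)‖ < ‖u‖ ^ 4 := by
        refine lt_of_le_of_lt (Padic.nonarchimedean _ _) ?_
        rw [max_lt_iff]
        constructor
        · rw [norm_neg, norm_mul, norm_pow]
          calc ‖(4:ℚ_[p])‖ * ‖u‖ ^ 3 ≤ 1 * ‖u‖ ^ 3 := by
                exact mul_le_mul_of_nonneg_right h4 (by positivity)
          _ = ‖u‖ ^ 3 := one_mul _
          _ < ‖u‖ ^ 4 := hu3
        · refine lt_of_le_of_lt (Padic.nonarchimedean _ _) ?_
          rw [max_lt_iff]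
          constructor
          · rw [norm_mul]
            calc ‖(24:ℚ_[p])‖ * ‖u‖ ≤ 1 * ‖u‖ := by
                  exact mul_le_mul_of_nonneg_right h24 hnu.le
            _ = ‖u‖ := one_mul _
            _ < ‖u‖ ^ 4 := hu1
          · exact lt_of_le_of_lt h20 h14
      have hFnorm : ‖F‖ = ‖u‖ ^ 4 := by
        have hsplit : F = u ^ 4 + (-(4 * u ^ 3) + (24 * u + 20)) := by
          rw [hF]; ring
        rw [hsplit]
        have hne : ‖(-(4 * u ^ 3) + (24 * u + 20))‖ ≠ ‖u ^ 4‖ := by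
          rw [norm_pow]; exact ne_of_lt hrest
        rw [Padic.add_eq_max_of_ne hne.symm, norm_pow]
        exact max_eq_left hrest.le
      have hF0 : F ≠ 0 := by
        intro h0
        rw [h0, norm_zero] at hFnorm
        have : (0:ℝ) < ‖u‖ ^ 4 := by positivity
        rw [← hFnorm] at this
        exact lt_irrefl _ this
      refine ⟨hF0, 2 * u.valuation, ?_⟩
      have hFv := Padic.norm_eq_zpow_neg_valuation hF0
      have huv := Padic.norm_eq_zpow_neg_valuation hu0
      rw [huv] at hFnorm
      rw [hFnorm, ← zpow_natCast ((p:ℝ) ^ (-u.valuation)) 4, ← zpow_mul] at hFv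
      have := hinj hFv
      omega
  obtain ⟨hF0, k, hFval⟩ := key
  have hv0 : v ≠ 0 := by
    intro h0
    rw [h0] at hv
    exact (mul_ne_zero hpQ hF0) (by simpa using hv.symm)
  have hval : 2 * v.valuation = 1 + 2 * k := by
    have hL : (v ^ 2).valuation = 2 * v.valuation := by
      rw [sq, Padic.valuation_mul hv0 hv0]; ring
    have hR : ((p : ℚ_[p]) * F).valuation = 1 + 2 * k := by
      rw [Padic.valuation_mul hpQ hF0, Padic.valuation_p, hFval]
    rw [← hL, hv, hR]
  omega
end
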